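/- In the Bershadsky–Polyakov C₂-algebra ℂ[z,x,y,t] with Poisson bracket {z,x}=x, {z,y}=-y, {x,y}=3z²-(3/4)t, and t Poisson central, the ideal generated by xy + z³ - (3/2)tz and t is a Poisson ideal, and the quotient is Poisson-isomorphic to ℂ[x,y,z]/⟨xy+z³⟩ with bracket {z,x}=x, {z,y}=-y, {x,y}=3z². -/
import Mathlib


open MvPolynomial

set_option synthInstance.maxHeartbeats 1000000
set_option maxHeartbeats 1000000

section PBHelpers

variable {R : Type*} [CommRing R]

lemma pb_zero_left (B : R → R → R) (hadd : ∀ a b c, B (a + b) c = B a c + B b c)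
    (a : R) : B 0 a = 0 := by
  have h := hadd 0 0 a
  rw [add_zero] at h
  linear_combination -h

lemma pb_zero_right (B : R → R → R) (hadd : ∀ a b c, B (a + b) c = B a c + B b c)
    (hskew : ∀ a b, B a b = -B b a) (a : R) : B a 0 = 0 := by
  rw [hskew, pb_zero_left B hadd, neg_zero]

lemma pb_neg_left (B : R → R → R) (hadd : ∀ a b c, B (a + b) c = B a c + B b c)
    (a b : R) : B (-a) b = -B a b := by
  have h := hadd a (-a) b
  rw [add_neg_cancel, pb_zero_left B hadd] at h
  linear_combination -h

lemma pb_add_right (B : R → R → R) (hadd : ∀ a b c, B (a + b) c = B a c + B b c)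
    (hskew : ∀ a b, B a b = -B b a) (a b c : R) : B a (b + c) = B a b + B a c := by
  rw [hskew a (b + c), hadd, hskew b a, hskew c a]; ring

lemma pb_sub_left (B : R → R → R) (hadd : ∀ a b c, B (a + b) c = B a c + B b c)
    (a b c : R) : B (a - b) c = B a c - B b c := by
  rw [sub_eq_add_neg, hadd, pb_neg_left B hadd, ← sub_eq_add_neg]

lemma pb_sub_right (B : R → R → R) (hadd : ∀ a b c, B (a + b) c = B a c + B b c)
    (hskew : ∀ a b, B a b = -B b a) (a b c : R) : B a (b - c) = B a b - B a c := by
  rw [hskew a (b - c), pb_sub_left B hadd, hskew b a, hskew c a]; ring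

lemma pb_mul_left (B : R → R → R) (hskew : ∀ a b, B a b = -B b a)
    (hleib : ∀ a b c, B a (b * c) = B a b * c + b * B a c) (a b c : R) :
    B (a * b) c = B a c * b + a * B b c := by
  rw [hskew (a * b) c, hleib, hskew c a, hskew c b]; ring

lemma pb_one_right (B : R → R → R)
    (hleib : ∀ a b c, B a (b * c) = B a b * c + b * B a c) (a : R) : B a 1 = 0 := by
  have h := hleib a 1 1
  simp only [mul_one, one_mul] at h
  linear_combination -h

end PBHelpers

section PBPoly

variable {σ : Type*}

lemma pb_smul_right (B : MvPolynomial σ ℂ → MvPolynomial σ ℂ → MvPolynomial σ ℂ)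
    (hsmul : ∀ (r : ℂ) a b, B (r • a) b = r • B a b)
    (hskew : ∀ a b, B a b = -B b a) (r : ℂ) (a b : MvPolynomial σ ℂ) :
    B a (r • b) = r • B a b := by
  rw [hskew a (r • b), hsmul, hskew b a, smul_neg, neg_neg]

lemma pb_self (B : MvPolynomial σ ℂ → MvPolynomial σ ℂ → MvPolynomial σ ℂ)
    (hskew : ∀ a b, B a b = -B b a) (a : MvPolynomial σ ℂ) : B a a = 0 := by
  have h := hskew a a
  have h2 : (2 : ℂ) • B a a = 0 := by
    rw [two_smul]
    nth_rewrite 1 [h]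
    exact neg_add_cancel _
  rcases smul_eq_zero.mp h2 with h3 | h3
  · norm_num at h3
  · exact h3

lemma pb_C_right (B : MvPolynomial σ ℂ → MvPolynomial σ ℂ → MvPolynomial σ ℂ)
    (hsmul : ∀ (r : ℂ) a b, B (r • a) b = r • B a b)
    (hskew : ∀ a b, B a b = -B b a)
    (hleib : ∀ a b c, B a (b * c) = B a b * c + b * B a c)
    (a : MvPolynomial σ ℂ) (c : ℂ) : B a (C c) = 0 := by
  have h1 : (C c : MvPolynomial σ ℂ) = c • 1 := by rw [smul_eq_C_mul, mul_one]
  rw [h1, pb_smul_right B hsmul hskew, pb_one_right B hleib, smul_zero]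

lemma pb_C_left (B : MvPolynomial σ ℂ → MvPolynomial σ ℂ → MvPolynomial σ ℂ)
    (hsmul : ∀ (r : ℂ) a b, B (r • a) b = r • B a b)
    (hskew : ∀ a b, B a b = -B b a)
    (hleib : ∀ a b c, B a (b * c) = B a b * c + b * B a c)
    (a : MvPolynomial σ ℂ) (c : ℂ) : B (C c) a = 0 := by
  rw [hskew, pb_C_right B hsmul hskew hleib, neg_zero]

lemma pb_derivation_mem (B : MvPolynomial σ ℂ → MvPolynomial σ ℂ → MvPolynomial σ ℂ)
    (hadd : ∀ a b c, B (a + b) c = B a c + B b c)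
    (hsmul : ∀ (r : ℂ) a b, B (r • a) b = r • B a b)
    (hskew : ∀ a b, B a b = -B b a)
    (hleib : ∀ a b c, B a (b * c) = B a b * c + b * B a c)
    (I : Ideal (MvPolynomial σ ℂ)) (P : MvPolynomial σ ℂ)
    (h : ∀ i, B P (X i) ∈ I) : ∀ g, B P g ∈ I := by
  intro g
  induction g using MvPolynomial.induction_on with
  | C c => rw [pb_C_right B hsmul hskew hleib]; exact I.zero_mem
  | add p q hp hq => rw [pb_add_right B hadd hskew]; exact I.add_mem hp hq
  | mul_X p i hp =>
      rw [hleib]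
      exact I.add_mem (I.mul_mem_right _ hp) (I.mul_mem_left _ (h i))

lemma pb_derivation_zero (B : MvPolynomial σ ℂ → MvPolynomial σ ℂ → MvPolynomial σ ℂ)
    (hadd : ∀ a b c, B (a + b) c = B a c + B b c)
    (hsmul : ∀ (r : ℂ) a b, B (r • a) b = r • B a b)
    (hskew : ∀ a b, B a b = -B b a)
    (hleib : ∀ a b c, B a (b * c) = B a b * c + b * B a c)
    (P : MvPolynomial σ ℂ)
    (h : ∀ i, B P (X i) = 0) : ∀ g, B P g = 0 := by
  intro g
  induction g using MvPolynomial.induction_on with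
  | C c => rw [pb_C_right B hsmul hskew hleib]
  | add p q hp hq => rw [pb_add_right B hadd hskew, hp, hq, add_zero]
  | mul_X p i hp => rw [hleib, hp, h i, zero_mul, mul_zero, add_zero]

end PBPoly

/-- In the Bershadsky–Polyakov C₂-algebra `ℂ[z,x,y,t]` with Poisson bracket
`{z,x}=x`, `{z,y}=-y`, `{x,y}=3z²-(3/4)t` and `t` Poisson central, the ideal
`⟨xy + z³ - (3/2)tz, t⟩` is a Poisson ideal, and the quotient is
Poisson-isomorphic to `ℂ[x,y,z]/⟨xy+z³⟩` with bracket `{z,x}=x`, `{z,y}=-y`,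
`{x,y}=3z²`. (In `Fin 4`: `X 0 = z, X 1 = x, X 2 = y, X 3 = t`; in `Fin 3`:
`X 0 = x, X 1 = y, X 2 = z`.) -/
theorem stmt_18
    (B : MvPolynomial (Fin 4) ℂ → MvPolynomial (Fin 4) ℂ → MvPolynomial (Fin 4) ℂ)
    (hadd : ∀ a b c, B (a + b) c = B a c + B b c)
    (hsmul : ∀ (r : ℂ) a b, B (r • a) b = r • B a b)
    (hskew : ∀ a b, B a b = -B b a)
    (hleib : ∀ a b c, B a (b * c) = B a b * c + b * B a c)
    (hjac : ∀ a b c, B a (B b c) + B b (B c a) + B c (B a b) = 0)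
    (hzx : B (X 0) (X 1) = X 1)
    (hzy : B (X 0) (X 2) = -X 2)
    (hxy : B (X 1) (X 2) = (3 : ℂ) • (X 0) ^ 2 - ((3 : ℂ) / 4) • X 3)
    (ht : ∀ f, B (X 3) f = 0)
    (B' : MvPolynomial (Fin 3) ℂ → MvPolynomial (Fin 3) ℂ → MvPolynomial (Fin 3) ℂ)
    (hadd' : ∀ a b c, B' (a + b) c = B' a c + B' b c)
    (hsmul' : ∀ (r : ℂ) a b, B' (r • a) b = r • B' a b)
    (hskew' : ∀ a b, B' a b = -B' b a)
    (hleib' : ∀ a b c, B' a (b * c) = B' a b * c + b * B' a c)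
    (hjac' : ∀ a b c, B' a (B' b c) + B' b (B' c a) + B' c (B' a b) = 0)
    (hzx' : B' (X 2) (X 0) = X 0)
    (hzy' : B' (X 2) (X 1) = -X 1)
    (hxy' : B' (X 0) (X 1) = (3 : ℂ) • (X 2) ^ 2) :
    (∀ f g : MvPolynomial (Fin 4) ℂ,
      f ∈ Ideal.span {(X 1 * X 2 + (X 0) ^ 3 - ((3 : ℂ)/2) • (X 3 * X 0) :
            MvPolynomial (Fin 4) ℂ), (X 3 : MvPolynomial (Fin 4) ℂ)} →
      B f g ∈ Ideal.span {(X 1 * X 2 + (X 0) ^ 3 - ((3 : ℂ)/2) • (X 3 * X 0) :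
            MvPolynomial (Fin 4) ℂ), (X 3 : MvPolynomial (Fin 4) ℂ)}) ∧
    ∃ φ : (MvPolynomial (Fin 4) ℂ ⧸
        Ideal.span {(X 1 * X 2 + (X 0) ^ 3 - ((3 : ℂ)/2) • (X 3 * X 0) :
            MvPolynomial (Fin 4) ℂ), (X 3 : MvPolynomial (Fin 4) ℂ)}) ≃+*
      (MvPolynomial (Fin 3) ℂ ⧸
        Ideal.span {(X 0 * X 1 + (X 2) ^ 3 : MvPolynomial (Fin 3) ℂ)}),
      φ (Ideal.Quotient.mk _ (X 1)) = Ideal.Quotient.mk _ (X 0) ∧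
      φ (Ideal.Quotient.mk _ (X 2)) = Ideal.Quotient.mk _ (X 1) ∧
      φ (Ideal.Quotient.mk _ (X 0)) = Ideal.Quotient.mk _ (X 2) ∧
      (∀ (f g : MvPolynomial (Fin 4) ℂ) (f' g' : MvPolynomial (Fin 3) ℂ),
        φ (Ideal.Quotient.mk _ f) = Ideal.Quotient.mk _ f' →
        φ (Ideal.Quotient.mk _ g) = Ideal.Quotient.mk _ g' →
        φ (Ideal.Quotient.mk _ (B f g)) = Ideal.Quotient.mk _ (B' f' g')) := by
  set P : MvPolynomial (Fin 4) ℂ :=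
    X 1 * X 2 + (X 0) ^ 3 - ((3 : ℂ)/2) • (X 3 * X 0) with hP
  set Q : MvPolynomial (Fin 3) ℂ := X 0 * X 1 + (X 2) ^ 3 with hQ
  set I : Ideal (MvPolynomial (Fin 4) ℂ) :=
    Ideal.span {P, (X 3 : MvPolynomial (Fin 4) ℂ)} with hIdef
  set J : Ideal (MvPolynomial (Fin 3) ℂ) := Ideal.span {Q} with hJdef
  -- basic bracket values
  have b00 : B (X 0) (X 0) = 0 := pb_self B hskew _
  have b11 : B (X 1) (X 1) = 0 := pb_self B hskew _
  have b22 : B (X 2) (X 2) = 0 := pb_self B hskew _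
  have b10 : B (X 1) (X 0) = -X 1 := by rw [hskew, hzx]
  have b20 : B (X 2) (X 0) = X 2 := by rw [hskew, hzy, neg_neg]
  have b21 : B (X 2) (X 1) = -((3 : ℂ) • (X 0) ^ 2 - ((3 : ℂ) / 4) • X 3) := by
    rw [hskew, hxy]
  have bt3 : ∀ f, B f (X 3) = 0 := fun f => by rw [hskew, ht, neg_zero]
  have b'00 : B' (X 0) (X 0) = 0 := pb_self B' hskew' _
  have b'11 : B' (X 1) (X 1) = 0 := pb_self B' hskew' _
  have b'22 : B' (X 2) (X 2) = 0 := pb_self B' hskew' _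
  have b'10 : B' (X 1) (X 0) = -((3 : ℂ) • (X 2) ^ 2) := by rw [hskew', hxy']
  have b'02 : B' (X 0) (X 2) = -X 0 := by rw [hskew', hzx']
  have b'12 : B' (X 1) (X 2) = X 1 := by rw [hskew', hzy', neg_neg]
  have z0l : ∀ a, B' 0 a = 0 := pb_zero_left B' hadd'
  have z0r : ∀ a, B' a 0 = 0 := pb_zero_right B' hadd' hskew'
  -- membership of generators
  have hPmem : P ∈ I := Ideal.subset_span (Set.mem_insert _ _)
  have hX3mem : (X 3 : MvPolynomial (Fin 4) ℂ) ∈ I :=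
    Ideal.subset_span (Set.mem_insert_of_mem _ rfl)
  have hQmem : Q ∈ J := Ideal.subset_span rfl
  -- expansion of B P g
  have BPexp : ∀ g, B P g = B (X 1) g * X 2 + X 1 * B (X 2) g
      + 3 * (X 0) ^ 2 * B (X 0) g
      - C ((3 : ℂ)/2) * (B (X 3) g * X 0 + X 3 * B (X 0) g) := by
    intro g
    have hP' : P = X 1 * X 2 + X 0 * X 0 * X 0 + (-(C ((3 : ℂ)/2) * X 3)) * X 0 := by
      rw [hP, smul_eq_C_mul]; ring
    rw [hP', hadd, hadd]
    rw [pb_mul_left B hskew hleib (X 1) (X 2) g]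
    rw [pb_mul_left B hskew hleib (X 0 * X 0) (X 0) g]
    rw [pb_mul_left B hskew hleib (X 0) (X 0) g]
    rw [pb_mul_left B hskew hleib (-(C ((3 : ℂ)/2) * X 3)) (X 0) g]
    rw [pb_neg_left B hadd (C ((3 : ℂ)/2) * X 3) g]
    rw [pb_mul_left B hskew hleib (C ((3 : ℂ)/2)) (X 3) g]
    rw [pb_C_left B hsmul hskew hleib]
    ring
  -- B P (X i) ∈ I
  have BPX : ∀ i, B P (X i) ∈ I := by
    intro i
    fin_cases i
    · show B P (X 0) ∈ I
      have e : B P (X 0) = 0 := by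
        rw [BPexp, b10, b20, b00, ht]; ring
      rw [e]; exact I.zero_mem
    · show B P (X 1) ∈ I
      have e : B P (X 1) = (-(C ((3 : ℂ)/4)) * X 1) * X 3 := by
        rw [BPexp, b11, b21, hzx, ht]
        simp only [smul_eq_C_mul, map_ofNat,
          show ((3 : ℂ)/2) = ((3 : ℂ)/4) * 2 by norm_num, map_mul]
        ring
      rw [e]; exact I.mul_mem_left _ hX3mem
    · show B P (X 2) ∈ I
      have e : B P (X 2) = (C ((3 : ℂ)/4) * X 2) * X 3 := by
        rw [BPexp, hxy, b22, hzy, ht]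
        simp only [smul_eq_C_mul, map_ofNat,
          show ((3 : ℂ)/2) = ((3 : ℂ)/4) * 2 by norm_num, map_mul]
        ring
      rw [e]; exact I.mul_mem_left _ hX3mem
    · show B P (X 3) ∈ I
      rw [bt3]; exact I.zero_mem
  have BPmem : ∀ g, B P g ∈ I := pb_derivation_mem B hadd hsmul hskew hleib I P BPX
  -- first conjunct : I is a Poisson ideal
  have poisson : ∀ f g : MvPolynomial (Fin 4) ℂ, f ∈ I → B f g ∈ I := by
    intro f g hf
    obtain ⟨u, v, huv⟩ := Ideal.mem_span_pair.mp hf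
    rw [← huv, hadd, pb_mul_left B hskew hleib, pb_mul_left B hskew hleib, ht,
      mul_zero, add_zero]
    exact I.add_mem (I.add_mem (I.mul_mem_left _ hPmem) (I.mul_mem_left _ (BPmem g)))
      (I.mul_mem_left _ hX3mem)
  -- B' Q g = 0
  have BQexp : ∀ g, B' Q g = B' (X 0) g * X 1 + X 0 * B' (X 1) g
      + 3 * (X 2) ^ 2 * B' (X 2) g := by
    intro g
    have hQ' : Q = X 0 * X 1 + X 2 * X 2 * X 2 := by rw [hQ]; ring
    rw [hQ', hadd']
    rw [pb_mul_left B' hskew' hleib' (X 0) (X 1) g]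
    rw [pb_mul_left B' hskew' hleib' (X 2 * X 2) (X 2) g]
    rw [pb_mul_left B' hskew' hleib' (X 2) (X 2) g]
    ring
  have BQX : ∀ i, B' Q (X i) = 0 := by
    intro i
    fin_cases i
    · show B' Q (X 0) = 0
      rw [BQexp, b'00, b'10, hzx']
      simp only [smul_eq_C_mul, map_ofNat]
      ring
    · show B' Q (X 1) = 0
      rw [BQexp, hxy', b'11, hzy']
      simp only [smul_eq_C_mul, map_ofNat]
      ring
    · show B' Q (X 2) = 0
      rw [BQexp, b'02, b'12, b'22]
      ring
  have BQzero : ∀ g, B' Q g = 0 :=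
    pb_derivation_zero B' hadd' hsmul' hskew' hleib' Q BQX
  have Jstable : ∀ a ∈ J, ∀ g, B' a g ∈ J := by
    intro a ha g
    obtain ⟨u, rfl⟩ := Ideal.mem_span_singleton'.mp ha
    rw [pb_mul_left B' hskew' hleib', BQzero, mul_zero, add_zero]
    exact J.mul_mem_left _ hQmem
  -- the projection map
  set sv : Fin 4 → MvPolynomial (Fin 3) ℂ := ![X 2, X 0, X 1, 0] with hsv
  have hsv0 : sv 0 = X 2 := rfl
  have hsv1 : sv 1 = X 0 := rfl
  have hsv2 : sv 2 = X 1 := rfl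
  have hsv3 : sv 3 = 0 := rfl
  -- base cases of the intertwining relation
  have base : ∀ (i j : Fin 4),
      aeval sv (B (X j) (X i)) = B' (aeval sv (X j : MvPolynomial (Fin 4) ℂ))
        (aeval sv (X i : MvPolynomial (Fin 4) ℂ)) := by
    intro i j
    fin_cases i <;> fin_cases j <;>
      simp [hsv0, hsv1, hsv2, hsv3, b00, b11, b22, b10, b20, b21, bt3, ht,
        hzx, hzy, hxy, b'00, b'11, b'22, b'10, b'02, b'12, hzx', hzy', hxy',
        z0l, z0r, map_smul]
  have keyX : ∀ (i : Fin 4) (f : MvPolynomial (Fin 4) ℂ),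
      aeval sv (B f (X i)) = B' (aeval sv f) (aeval sv (X i : MvPolynomial (Fin 4) ℂ)) := by
    intro i f
    induction f using MvPolynomial.induction_on with
    | C c =>
        rw [pb_C_left B hsmul hskew hleib, map_zero, aeval_C, algebraMap_eq,
          pb_C_left B' hsmul' hskew' hleib']
    | add p q hp hq =>
        rw [hadd, map_add, map_add, hadd', hp, hq]
    | mul_X p j hp =>
        rw [pb_mul_left B hskew hleib, map_add, map_mul, map_mul, map_mul,
          pb_mul_left B' hskew' hleib', hp, base i j]
  have key : ∀ (f g : MvPolynomial (Fin 4) ℂ),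
      aeval sv (B f g) = B' (aeval sv f) (aeval sv g) := by
    intro f g
    induction g using MvPolynomial.induction_on with
    | C c =>
        rw [pb_C_right B hsmul hskew hleib, map_zero, aeval_C, algebraMap_eq,
          pb_C_right B' hsmul' hskew' hleib']
    | add p q hp hq =>
        rw [pb_add_right B hadd hskew, map_add, map_add,
          pb_add_right B' hadd' hskew', hp, hq]
    | mul_X p i hp =>
        rw [hleib, map_add, map_mul, map_mul, map_mul, hleib', hp, keyX i f]
  -- the ring homs
  set tv : Fin 3 → MvPolynomial (Fin 4) ℂ := ![X 1, X 2, X 0] with htv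
  have hkerF : ∀ a ∈ I,
      ((Ideal.Quotient.mk J).comp (aeval sv : MvPolynomial (Fin 4) ℂ →ₐ[ℂ]
        MvPolynomial (Fin 3) ℂ).toRingHom) a = 0 := by
    intro a ha
    rw [← RingHom.mem_ker]
    refine Ideal.span_le.mpr ?_ ha
    rintro x (rfl | rfl) <;>
      simp only [SetLike.mem_coe, RingHom.mem_ker, RingHom.coe_comp,
        Function.comp_apply, AlgHom.toRingHom_eq_coe, RingHom.coe_coe]
    · have h0 : aeval sv P = Q := by
        rw [hP, hQ]
        simp [hsv0, hsv1, hsv2, hsv3, map_smul]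
      rw [h0]
      exact (Ideal.Quotient.eq_zero_iff_mem).mpr hQmem
    · rw [aeval_X, hsv3, map_zero]
  have hkerG : ∀ a ∈ J,
      ((Ideal.Quotient.mk I).comp (aeval tv : MvPolynomial (Fin 3) ℂ →ₐ[ℂ]
        MvPolynomial (Fin 4) ℂ).toRingHom) a = 0 := by
    intro a ha
    rw [← RingHom.mem_ker]
    refine Ideal.span_le.mpr ?_ ha
    rintro x rfl
    simp only [SetLike.mem_coe, RingHom.mem_ker, RingHom.coe_comp,
      Function.comp_apply, AlgHom.toRingHom_eq_coe, RingHom.coe_coe]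
    have h1 : aeval tv Q = P + (C ((3 : ℂ)/2) * X 0) * X 3 := by
      rw [hQ, hP, smul_eq_C_mul]
      simp only [map_add, map_mul, map_pow, aeval_X]
      show X 1 * X 2 + (X 0 : MvPolynomial (Fin 4) ℂ) ^ 3 = _
      ring
    rw [h1, Ideal.Quotient.eq_zero_iff_mem]
    exact I.add_mem hPmem (I.mul_mem_left _ hX3mem)
  set F : MvPolynomial (Fin 4) ℂ ⧸ I →+* MvPolynomial (Fin 3) ℂ ⧸ J :=
    Ideal.Quotient.lift I _ hkerF with hF
  set G : MvPolynomial (Fin 3) ℂ ⧸ J →+* MvPolynomial (Fin 4) ℂ ⧸ I :=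
    Ideal.Quotient.lift J _ hkerG with hG
  have hFmk : ∀ a, F (Ideal.Quotient.mk I a) = Ideal.Quotient.mk J (aeval sv a) := by
    intro a
    rw [hF, Ideal.Quotient.lift_mk]
    rfl
  have hGmk : ∀ a, G (Ideal.Quotient.mk J a) = Ideal.Quotient.mk I (aeval tv a) := by
    intro a
    rw [hG, Ideal.Quotient.lift_mk]
    rfl
  have hmkX3 : Ideal.Quotient.mk I (X 3) = 0 :=
    Ideal.Quotient.eq_zero_iff_mem.mpr hX3mem
  have hFG : F.comp G = RingHom.id _ := by
    apply Ideal.Quotient.ringHom_ext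
    apply MvPolynomial.ringHom_ext
    · intro r
      simp only [RingHom.coe_comp, Function.comp_apply, RingHom.id_apply, hGmk,
        hFmk, aeval_C, algebraMap_eq]
    · intro i
      fin_cases i <;>
        simp [hGmk, hFmk, htv, hsv0, hsv1, hsv2, hsv3, hmkX3]
  have hGF : G.comp F = RingHom.id _ := by
    apply Ideal.Quotient.ringHom_ext
    apply MvPolynomial.ringHom_ext
    · intro r
      simp only [RingHom.coe_comp, Function.comp_apply, RingHom.id_apply, hFmk,
        hGmk, aeval_C, algebraMap_eq]
    · intro i
      fin_cases i <;>
        simp [hGmk, hFmk, htv, hsv0, hsv1, hsv2, hsv3, hmkX3]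
  refine ⟨poisson, RingEquiv.ofRingHom F G hFG hGF, ?_, ?_, ?_, ?_⟩
  · show F (Ideal.Quotient.mk I (X 1)) = _
    rw [hFmk]; simp [hsv1]
  · show F (Ideal.Quotient.mk I (X 2)) = _
    rw [hFmk]; simp [hsv2]
  · show F (Ideal.Quotient.mk I (X 0)) = _
    rw [hFmk]; simp [hsv0]
  · intro f g f' g' hf hg
    replace hf : Ideal.Quotient.mk J (aeval sv f) = Ideal.Quotient.mk J f' := by
      rw [← hFmk]; exact hf
    replace hg : Ideal.Quotient.mk J (aeval sv g) = Ideal.Quotient.mk J g' := by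
      rw [← hFmk]; exact hg
    have d1 : aeval sv f - f' ∈ J := Ideal.Quotient.eq.mp hf
    have d2 : aeval sv g - g' ∈ J := Ideal.Quotient.eq.mp hg
    show F (Ideal.Quotient.mk I (B f g)) = _
    rw [hFmk, key f g, Ideal.Quotient.eq]
    have exp : B' (aeval sv f) (aeval sv g) - B' f' g'
        = B' (aeval sv f - f') (aeval sv g) + B' f' (aeval sv g - g') := by
      rw [pb_sub_left B' hadd', pb_sub_right B' hadd' hskew']
      ring
    rw [exp]
    refine J.add_mem (Jstable _ d1 _) ?_
    rw [hskew']
    exact J.neg_mem (Jstable _ d2 _)
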